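/- (Monotone variational principle.) Let (X;≤;d) be a quasi-ordered metric space that is strongly complete (every ≤-ascending d-Cauchy sequence converges, and the limit of every ascending convergent sequence is an upper bound of it), and let φ : X → ℝ ∪ {+∞} be proper (Dom(φ) := {x : φ(x) < +∞} is nonempty), bounded below, and descending (≤,d)-lsc. Then for each u ∈ Dom(φ) there exists v ∈ Dom(φ) such that: (i) u ≤ v and d(u,v) ≤ φ(u) − φ(v); and (ii) for every x ∈ X with v ≤ x and x ≠ v one has d(v,x) + φ(x) > φ(v) (in the extended reals). -/

import Mathlib

/-- Monotone variational principle (EVP-m): on a strongly complete quasi-ordered metric space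
`(X; le; d)`, for a proper, bounded below, descending `(le, d)`-lsc function
`φ : X → ℝ ∪ {+∞}`, each `u ∈ Dom(φ)` admits a point `v ∈ Dom(φ)` with `u ≤ v`,
`d(u, v) ≤ φ u − φ v`, and such that every `x ≠ v` with `v ≤ x` satisfies
`d(v, x) + φ x > φ v`. -/
theorem stmt_16 {X : Type*} [MetricSpace X] (le : X → X → Prop)
    (hrefl : ∀ x, le x x)
    (htrans : ∀ x y z, le x y → le y z → le x z)
    (hcomplete : ∀ x : ℕ → X, (∀ n, le (x n) (x (n + 1))) → CauchySeq x →
      ∃ v, Filter.Tendsto x Filter.atTop (nhds v))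
    (hselfClosed : ∀ x : ℕ → X, (∀ n, le (x n) (x (n + 1))) → ∀ v,
      Filter.Tendsto x Filter.atTop (nhds v) → ∀ n, le (x n) v)
    (φ : X → EReal)
    (hne_bot : ∀ x, φ x ≠ ⊥)
    (hproper : ∃ x, φ x ≠ ⊤)
    (hbdd : ∃ c : ℝ, ∀ x, (c : EReal) ≤ φ x)
    (hlsc : ∀ x : ℕ → X, ∀ l : X, (∀ n, le (x n) (x (n + 1))) →
      Filter.Tendsto x Filter.atTop (nhds l) → (∀ n, le (x n) l) →
      (∀ n, φ (x (n + 1)) ≤ φ (x n)) → ∀ n, φ l ≤ φ (x n)) :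
    ∀ u, φ u ≠ ⊤ →
      ∃ v, φ v ≠ ⊤ ∧ le u v ∧ (dist u v : EReal) ≤ φ u - φ v ∧
        ∀ x, le v x → x ≠ v → φ v < (dist v x : EReal) + φ x := by
  obtain ⟨c, hc⟩ := hbdd
  intro u hu
  set ψ : X → ℝ := fun x => (φ x).toReal with hψ
  have hcoe : ∀ x, φ x ≠ ⊤ → φ x = ((ψ x : ℝ) : EReal) := fun x hx =>
    (EReal.coe_toReal hx (hne_bot x)).symm
  have hcψ : ∀ x, φ x ≠ ⊤ → c ≤ ψ x := by
    intro x hx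
    have h := hc x
    rw [hcoe x hx] at h
    exact_mod_cast h
  set S : X → Set X := fun x => {y | le x y ∧ φ y ≠ ⊤ ∧ dist x y ≤ ψ x - ψ y} with hSdef
  have hself : ∀ x, φ x ≠ ⊤ → x ∈ S x := fun x hx => ⟨hrefl x, hx, by simp⟩
  have hStrans : ∀ x y z, y ∈ S x → z ∈ S y → z ∈ S x := by
    rintro x y z ⟨h1, h2, h3⟩ ⟨h4, h5, h6⟩
    refine ⟨htrans _ _ _ h1 h4, h5, (dist_triangle x y z).trans (by linarith)⟩
  have hbddS : ∀ x, BddBelow (ψ '' S x) := by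
    intro x
    exact ⟨c, by rintro r ⟨y, hy, rfl⟩; exact hcψ y hy.2.1⟩
  have step : ∀ (n : ℕ) (x : X), φ x ≠ ⊤ →
      ∃ y, y ∈ S x ∧ ψ y ≤ sInf (ψ '' S x) + (1/2)^n := by
    intro n x hx
    obtain ⟨r, ⟨y, hy, rfl⟩, hr⟩ := Real.lt_sInf_add_pos
      (Set.Nonempty.image ψ ⟨x, hself x hx⟩) (show (0:ℝ) < (1/2)^n by positivity)
    exact ⟨y, hy, hr.le⟩
  -- construct the iterative sequence
  let f : ℕ → {x : X // φ x ≠ ⊤} := fun n => Nat.rec ⟨u, hu⟩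
    (fun n p => ⟨(step n p.1 p.2).choose, (step n p.1 p.2).choose_spec.1.2.1⟩) n
  set g : ℕ → X := fun n => (f n).1 with hg
  have hDg : ∀ n, φ (g n) ≠ ⊤ := fun n => (f n).2
  have hmem : ∀ n, g (n+1) ∈ S (g n) ∧ ψ (g (n+1)) ≤ sInf (ψ '' S (g n)) + (1/2)^n :=
    fun n => (step n (f n).1 (f n).2).choose_spec
  have hasc : ∀ n, le (g n) (g (n+1)) := fun n => (hmem n).1.1
  have hchain : ∀ n m, n ≤ m → g m ∈ S (g n) := by
    intro n m h
    induction m, h using Nat.le_induction with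
    | base => exact hself _ (hDg n)
    | succ m hm ih => exact hStrans _ _ _ ih (hmem m).1
  have hanti : Antitone (fun n => ψ (g n)) := by
    apply antitone_nat_of_succ_le
    intro n
    have h1 := (hmem n).1.2.2
    have h2 : (0:ℝ) ≤ dist (g n) (g (n+1)) := dist_nonneg
    linarith
  have hbddR : BddBelow (Set.range fun n => ψ (g n)) :=
    ⟨c, by rintro r ⟨n, rfl⟩; exact hcψ _ (hDg n)⟩
  set L : ℝ := ⨅ n, ψ (g n) with hLdef
  have hL : Filter.Tendsto (fun n => ψ (g n)) Filter.atTop (nhds L) :=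
    tendsto_atTop_ciInf hanti hbddR
  have hLle : ∀ n, L ≤ ψ (g n) := fun n => ciInf_le hbddR n
  have hcauchy : CauchySeq g := by
    apply cauchySeq_of_le_tendsto_0 (fun N => ψ (g N) - L)
    · intro n m N hn hm
      rcases le_total n m with h | h
      · have h1 := (hchain n m h).2.2
        have h2 := hanti hn
        have h3 := hLle m
        simp only at h1 h2 h3 ⊢
        linarith
      · have h1 := (hchain m n h).2.2
        have h2 := hanti hm
        have h3 := hLle n
        rw [dist_comm]
        simp only at h1 h2 h3 ⊢
        linarith
    · have := hL.sub (tendsto_const_nhds (x := L))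
      simpa using this
  obtain ⟨v, hv⟩ := hcomplete g hasc hcauchy
  have hlev : ∀ n, le (g n) v := hselfClosed g hasc v hv
  have hφdesc : ∀ n, φ (g (n+1)) ≤ φ (g n) := by
    intro n
    rw [hcoe _ (hDg (n+1)), hcoe _ (hDg n)]
    exact_mod_cast hanti (Nat.le_succ n)
  have hφv : ∀ n, φ v ≤ φ (g n) := hlsc g v hasc hv hlev hφdesc
  have hDv : φ v ≠ ⊤ := ne_top_of_le_ne_top (hDg 0) (hφv 0)
  have hψv : ∀ n, ψ v ≤ ψ (g n) := by
    intro n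
    have h := hφv n
    rw [hcoe v hDv, hcoe _ (hDg n)] at h
    exact_mod_cast h
  have hψvL : ψ v ≤ L := le_ciInf hψv
  have hdistv : ∀ n, dist (g n) v ≤ ψ (g n) - ψ v := by
    intro n
    refine le_of_tendsto (Filter.Tendsto.dist tendsto_const_nhds hv) ?_
    filter_upwards [Filter.eventually_ge_atTop n] with m hm
    have h1 := (hchain n m hm).2.2
    have h2 := hψv m
    linarith
  have hvS : ∀ n, v ∈ S (g n) := fun n => ⟨hlev n, hDv, hdistv n⟩
  have hgu : g 0 = u := rfl
  refine ⟨v, hDv, ?_, ?_, ?_⟩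
  · have := (hvS 0).1
    rwa [hgu] at this
  · have h := (hvS 0).2.2
    rw [hgu] at h
    rw [hcoe u hu, hcoe v hDv, ← EReal.coe_sub]
    exact_mod_cast h
  · intro x hvx hxv
    by_cases hx : φ x = ⊤
    · rw [hx, EReal.add_top_of_ne_bot (by simp : ((dist v x : ℝ) : EReal) ≠ ⊥)]
      exact hDv.lt_top
    · by_contra hcon
      push_neg at hcon
      rw [hcoe x hx, hcoe v hDv, ← EReal.coe_add] at hcon
      have hcon' : dist v x + ψ x ≤ ψ v := by exact_mod_cast hcon
      have hxS : x ∈ S v := ⟨hvx, hx, by linarith⟩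
      have hxSn : ∀ n, x ∈ S (g n) := fun n => hStrans _ _ _ (hvS n) hxS
      have h1 : ∀ n, ψ (g (n+1)) ≤ ψ x + (1/2)^n := fun n =>
        (hmem n).2.trans (add_le_add_left (csInf_le (hbddS _) ⟨x, hxSn n, rfl⟩) _)
      have hLx : L ≤ ψ x := by
        have t1 : Filter.Tendsto (fun n => ψ (g (n+1))) Filter.atTop (nhds L) :=
          hL.comp (Filter.tendsto_add_atTop_nat 1)
        have t2 : Filter.Tendsto (fun n : ℕ => ψ x + (1/2:ℝ)^n) Filter.atTop
            (nhds (ψ x + 0)) :=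
          tendsto_const_nhds.add
            (tendsto_pow_atTop_nhds_zero_of_lt_one (by norm_num) (by norm_num))
        have := le_of_tendsto_of_tendsto' t1 t2 h1
        simpa using this
      have hd0 : dist v x ≤ 0 := by
        have := hψvL.trans hLx
        linarith
      exact hxv (dist_le_zero.mp hd0).symm
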